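/- Let A ∈ ℝ^{n×n}, B ∈ ℝ^{n×m}, U ⊆ ℝᵐ, X∞ ⊆ ℝⁿ, V_p : ℝⁿ → ℝ, and let Q ∈ ℝ^{n×n}, R ∈ ℝ^{m×m} and constants q, ρ ≥ 0 satisfy xᵀQx ≤ q‖x‖² for all x and uᵀRu ≤ ρ‖u‖² for all u (e.g., q and ρ the largest eigenvalues of symmetric Q ⪰ 0 and R ≻ 0). Assume there exist constants α₃ > 0 and c > 0 such that for every x ∈ X∞ there exists u ∈ U with ‖u‖ ≤ c‖x‖, A x + B u ∈ X∞, and V_p(A x + B u) − V_p(x) ≤ −α₃‖x‖². Then for every β ≥ β* := (q + c²ρ)/α₃ and every x ∈ X∞, there exists u ∈ U satisfying A x + B u ∈ X∞ and β V_p(A x + B u) − β V_p(x) ≤ −ℓ(x,u), where ℓ(x,u) := xᵀQx + uᵀRu. -/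

import Mathlib

open scoped Matrix

/-- Suppose `xᵀQx ≤ q‖x‖²`, `uᵀRu ≤ ρ‖u‖²` (with `Q ⪰ 0`, `R ≻ 0`
symmetric, `q, ρ ≥ 0`), and on the control-invariant set `X∞` there are `α₃ > 0`,
`c > 0` such that every `x ∈ X∞` admits `u ∈ U` with `‖u‖ ≤ c‖x‖`, `Ax + Bu ∈ X∞`,
and `V_p(Ax+Bu) − V_p(x) ≤ −α₃‖x‖²`. Then for every `β ≥ β* = (q + c²ρ)/α₃` and
every `x ∈ X∞` there is `u ∈ U` with `Ax + Bu ∈ X∞` and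
`β V_p(Ax+Bu) − β V_p(x) ≤ −ℓ(x,u)` where `ℓ(x,u) = xᵀQx + uᵀRu`. -/
theorem stmt_4 {n m : ℕ} (A : Matrix (Fin n) (Fin n) ℝ) (B : Matrix (Fin n) (Fin m) ℝ)
    (U : Set (EuclideanSpace ℝ (Fin m))) (Xinf : Set (EuclideanSpace ℝ (Fin n)))
    (Vp : EuclideanSpace ℝ (Fin n) → ℝ)
    (Q : Matrix (Fin n) (Fin n) ℝ) (R : Matrix (Fin m) (Fin m) ℝ)
    (hQpsd : Q.PosSemidef) (hRpd : R.PosDef)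
    (q ρ : ℝ) (hq : 0 ≤ q) (hρ : 0 ≤ ρ)
    (hQ : ∀ x : EuclideanSpace ℝ (Fin n), (x : Fin n → ℝ) ⬝ᵥ Q.mulVec x ≤ q * ‖x‖ ^ 2)
    (hR : ∀ u : EuclideanSpace ℝ (Fin m), (u : Fin m → ℝ) ⬝ᵥ R.mulVec u ≤ ρ * ‖u‖ ^ 2)
    (α₃ c : ℝ) (hα₃ : 0 < α₃) (hc : 0 < c)
    (hdec : ∀ x ∈ Xinf, ∃ u ∈ U, ‖u‖ ≤ c * ‖x‖ ∧
      (WithLp.toLp 2 (A.mulVec x + B.mulVec u) : EuclideanSpace ℝ (Fin n)) ∈ Xinf ∧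
      Vp (WithLp.toLp 2 (A.mulVec x + B.mulVec u) : EuclideanSpace ℝ (Fin n)) - Vp x ≤ -α₃ * ‖x‖ ^ 2) :
    ∀ β ≥ (q + c ^ 2 * ρ) / α₃, ∀ x ∈ Xinf, ∃ u ∈ U,
      (WithLp.toLp 2 (A.mulVec x + B.mulVec u) : EuclideanSpace ℝ (Fin n)) ∈ Xinf ∧
      β * Vp (WithLp.toLp 2 (A.mulVec x + B.mulVec u) : EuclideanSpace ℝ (Fin n)) - β * Vp x ≤
        -((x : Fin n → ℝ) ⬝ᵥ Q.mulVec x + (u : Fin m → ℝ) ⬝ᵥ R.mulVec u) := by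
  intro β hβ x hx
  obtain ⟨u, hu, hnorm, hmem, hdecr⟩ := hdec x hx
  refine ⟨u, hu, hmem, ?_⟩
  have hβ0 : 0 ≤ β := le_trans (div_nonneg (by positivity) hα₃.le) hβ
  have h1 : β * Vp (WithLp.toLp 2 (A.mulVec x + B.mulVec u) : EuclideanSpace ℝ (Fin n)) - β * Vp x
      ≤ β * (-α₃ * ‖x‖ ^ 2) := by
    have := mul_le_mul_of_nonneg_left hdecr hβ0
    linarith [this]
  have h2 : (q + c ^ 2 * ρ) ≤ β * α₃ := (div_le_iff₀ hα₃).mp hβ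
  have hxn : (0:ℝ) ≤ ‖x‖ ^ 2 := by positivity
  have h3 : β * (-α₃ * ‖x‖ ^ 2) ≤ -((q + c ^ 2 * ρ) * ‖x‖ ^ 2) := by
    nlinarith
  have hRu : (u : Fin m → ℝ) ⬝ᵥ R.mulVec u ≤ c ^ 2 * ρ * ‖x‖ ^ 2 := by
    have h4 : ‖u‖ ^ 2 ≤ (c * ‖x‖) ^ 2 :=
      pow_le_pow_left₀ (norm_nonneg u) hnorm 2
    have := hR u
    nlinarith
  have hQx := hQ x
  nlinarith
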